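/- Let u be a finite binary word and φ the Thue–Morse morphism. Then: C(φ(u), 0) = |u|; C(φ(u), 01) = |u|_0 + binom(|u|, 2); and C(φ(u), 011) = C(u, 01) + binom(|u|_0, 2) + binom(|u|, 3). -/

import Mathlib

/-- The number of occurrences of `w` as a (scattered) subword of `u`:
the binomial coefficient of the words `u` and `w`. -/
def wordBinom {A : Type*} [DecidableEq A] (u w : List A) : ℕ := u.sublists.count w

/-- `k`-binomial equivalence of finite words: all binomial coefficients with respect to
words of length at most `k` agree. -/
def BinEquiv {A : Type*} [DecidableEq A] (k : ℕ) (u v : List A) : Prop :=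
  ∀ x : List A, x.length ≤ k → wordBinom u x = wordBinom v x

/-- `k`-binomial equivalence as a setoid. -/
def binSetoid (A : Type*) [DecidableEq A] (k : ℕ) : Setoid (List A) where
  r := BinEquiv k
  iseqv := ⟨fun _ _ _ => rfl, fun h x hx => (h x hx).symm,
    fun h h' x hx => (h x hx).trans (h' x hx)⟩

/-- `u` occurs in the infinite word `x` at position `i`. -/
def OccursAt {A : Type*} (u : List A) (x : ℕ → A) (i : ℕ) : Prop :=
  u = (List.range u.length).map (fun j => x (i + j))

/-- `u` is a factor of the infinite word `x`. -/
def FactorOf {A : Type*} (u : List A) (x : ℕ → A) : Prop := ∃ i, OccursAt u x i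

/-- The set of length-`n` factors of `x`. -/
def Fac {A : Type*} (x : ℕ → A) (n : ℕ) : Set (List A) :=
  {u | u.length = n ∧ FactorOf u x}

/-- Factor complexity of an infinite word. -/
noncomputable def fc {A : Type*} (x : ℕ → A) (n : ℕ) : ℕ := (Fac x n).ncard

/-- `k`-binomial complexity of an infinite word: the number of `k`-binomial equivalence
classes of length-`n` factors. -/
noncomputable def bc {A : Type*} [DecidableEq A] (x : ℕ → A) (k n : ℕ) : ℕ :=
  (Quotient.mk (binSetoid A k) '' Fac x n).ncard

/-- The Thue–Morse morphism `φ : 0 ↦ 01, 1 ↦ 10`. -/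
def phi : Fin 2 → List (Fin 2) := fun a => if a = 0 then [0, 1] else [1, 0]

/-- The Thue–Morse morphism applied to a finite word. -/
def phiW : List (Fin 2) → List (Fin 2) := fun u => (u.map phi).flatten

/-- The `k`-th power `φ^k` of the Thue–Morse morphism, on finite words. -/
def phiPow (k : ℕ) : List (Fin 2) → List (Fin 2) := phiW^[k]

/-- `φ^k` applied to an infinite binary word (note `φ^k` is `2^k`-uniform). -/
def phiPowInf (k : ℕ) (y : ℕ → Fin 2) : ℕ → Fin 2 :=
  fun n => (phiPow k [y (n / 2 ^ k)]).getD (n % 2 ^ k) 0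

open Fin.NatCast in
/-- The Thue–Morse word `t = 0110100110010110⋯`, `t n` being the parity of the
binary digit sum of `n`. -/
def thueMorse : ℕ → Fin 2 := fun n => ((Nat.digits 2 n).sum : Fin 2)

lemma beq_inst_eq {A : Type*} [DecidableEq A] :
    (instBEqOfDecidableEq : BEq (List A)) = List.instBEq :=
  lawful_beq_subsingleton _ _

lemma wordBinom_cons {A : Type*} [DecidableEq A] (a b : A) (u w : List A) :
    wordBinom (a :: u) (b :: w)
      = wordBinom u (b :: w) + if a = b then wordBinom u w else 0 := by
  unfold wordBinom
  have h := (List.sublists_cons_perm_append a u).count_eq (b :: w)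
  rw [h, List.count_append]
  congr 1
  rcases eq_or_ne a b with h | h
  · subst h
    rw [if_pos rfl]
    have := List.count_map_of_injective u.sublists (List.cons a)
      (fun x y h => by injection h) w
    convert this using 2
  · rw [if_neg h, List.count_eq_zero]
    simp only [List.mem_map, not_exists]
    rintro x ⟨_, hx⟩
    exact h (List.head_eq_of_cons_eq hx)

lemma wordBinom_nil {A : Type*} [DecidableEq A] (u : List A) :
    wordBinom u [] = 1 := by
  induction u with
  | nil => rfl
  | cons a u ih =>
    unfold wordBinom at *
    have h := (List.sublists_cons_perm_append a u).count_eq ([] : List A)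
    rw [h, List.count_append]
    have : List.count ([] : List A) (List.map (List.cons a) u.sublists) = 0 := by
      rw [List.count_eq_zero]
      simp
    omega

lemma wordBinom_single {A : Type*} [DecidableEq A] (u : List A) (b : A) :
    wordBinom u [b] = u.count b := by
  induction u with
  | nil => rfl
  | cons a u ih =>
    rw [wordBinom_cons, ih, wordBinom_nil, List.count_cons]
    rcases eq_or_ne a b with h | h <;> simp [h]


lemma count_zero_add_count_one (u : List (Fin 2)) :
    u.count 0 + u.count 1 = u.length := by
  induction u with
  | nil => rfl
  | cons a u ih =>
    fin_cases a <;> simp [List.count_cons] <;> omega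

lemma key (u : List (Fin 2)) :
    wordBinom (phiW u) [0] = u.length ∧
    wordBinom (phiW u) [1] = u.length ∧
    wordBinom (phiW u) [0, 1] = u.count 0 + Nat.choose u.length 2 ∧
    wordBinom (phiW u) [1, 1] = Nat.choose u.length 2 ∧
    wordBinom (phiW u) [0, 1, 1]
      = wordBinom u [0, 1] + Nat.choose (u.count 0) 2 + Nat.choose u.length 3 := by
  induction u with
  | nil => exact ⟨rfl, rfl, rfl, rfl, rfl⟩
  | cons a u ih =>
    obtain ⟨h0, h1, h01, h11, h011⟩ := ih
    have hcount : u.count 0 + u.count 1 = u.length := count_zero_add_count_one u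
    have hc1 : wordBinom u [1] = u.count 1 := wordBinom_single u 1
    have e00 : ((0:Fin 2) = 0) = True := by decide
    have e01 : ((0:Fin 2) = 1) = False := by decide
    have e10 : ((1:Fin 2) = 0) = False := by decide
    have e11 : ((1:Fin 2) = 1) = True := by decide
    have ha : a = 0 ∨ a = 1 := by fin_cases a <;> simp
    rcases ha with rfl | rfl
    · have hv : phiW ((0 : Fin 2) :: u) = 0 :: 1 :: phiW u := by
        simp [phiW]; rfl
      rw [hv]
      refine ⟨?_, ?_, ?_, ?_, ?_⟩ <;>
        simp [wordBinom_cons, wordBinom_nil, h0, h1, h01, h11, h011, hc1,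
          List.count_cons, Nat.choose_succ_succ, Nat.choose_one_right] <;>
        omega
    · have hv : phiW ((1 : Fin 2) :: u) = 1 :: 0 :: phiW u := by
        simp [phiW]; rfl
      rw [hv]
      refine ⟨?_, ?_, ?_, ?_, ?_⟩ <;>
        simp [wordBinom_cons, wordBinom_nil, h0, h1, h01, h11, h011, hc1,
          List.count_cons, Nat.choose_succ_succ, Nat.choose_one_right] <;>
        omega

theorem binomial_coefficients_of_phi_images (u : List (Fin 2)) :
    wordBinom (phiW u) [0] = u.length ∧
    wordBinom (phiW u) [0, 1] = u.count 0 + Nat.choose u.length 2 ∧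
    wordBinom (phiW u) [0, 1, 1]
      = wordBinom u [0, 1] + Nat.choose (u.count 0) 2 + Nat.choose u.length 3 := by
  obtain ⟨h0, _, h01, _, h011⟩ := key u
  exact ⟨h0, h01, h011⟩
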